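/- Local Pohozaev identity (Lemma 2.3). Let (u_ε, v_ε) be a nontrivial solution of the singularly perturbed system −ε²Δu + (ε²P(x)+1)u = μ₁u³ + βuv², −ε²Δv + (ε²Q(x)+1)v = μ₂v³ + βvu² on ℝᴺ. Then for any bounded domain Ω ⊂ ℝᴺ (with regular boundary, outward unit normal n = (n₁,…,n_N)) and every j = 1,…,N: ε²∫_Ω (∂_{x_j}P · u_ε² + ∂_{x_j}Q · v_ε²) = −β∫_{∂Ω} v_ε² u_ε² n_j dS − 2ε²∫_{∂Ω} (∂_{x_j}u_ε ∂_n u_ε + ∂_{x_j}v_ε ∂_n v_ε) dS + ε²∫_{∂Ω} (|∇u_ε|² + |∇v_ε|²) n_j dS + ∫_{∂Ω} [(ε²P+1)u_ε² + (ε²Q+1)v_ε²] n_j dS − (1/2)(μ₁∫_{∂Ω} u_ε⁴ n_j dS + μ₂∫_{∂Ω} v_ε⁴ n_j dS). -/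

import Mathlib

open MeasureTheory Real Filter RealInnerProductSpace

noncomputable section

abbrev EucSp (N : ℕ) := EuclideanSpace ℝ (Fin N)

/-- The Laplacian, written as the sum of the pure second directional derivatives. -/
def lap {N : ℕ} (f : EuclideanSpace ℝ (Fin N) → ℝ) (x : EuclideanSpace ℝ (Fin N)) : ℝ :=
  ∑ i : Fin N, fderiv ℝ (fun y => fderiv ℝ f y (EuclideanSpace.single i 1)) x
    (EuclideanSpace.single i 1)

/-- Partial derivative in the `i`-th coordinate direction. -/
def pd {N : ℕ} (f : EuclideanSpace ℝ (Fin N) → ℝ) (i : Fin N)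
    (x : EuclideanSpace ℝ (Fin N)) : ℝ :=
  fderiv ℝ f x (EuclideanSpace.single i 1)

/-- The gradient, as a vector of `EuclideanSpace ℝ (Fin N)`. -/
def grad {N : ℕ} (f : EuclideanSpace ℝ (Fin N) → ℝ) (x : EuclideanSpace ℝ (Fin N)) :
    EuclideanSpace ℝ (Fin N) :=
  (EuclideanSpace.equiv (Fin N) ℝ).symm fun i => pd f i x

/-- The Hessian matrix of second partial derivatives. -/
def hessian {N : ℕ} (f : EuclideanSpace ℝ (Fin N) → ℝ) (x : EuclideanSpace ℝ (Fin N)) :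
    Matrix (Fin N) (Fin N) ℝ :=
  Matrix.of fun i j => fderiv ℝ (fun y => pd f j y) x (EuclideanSpace.single i 1)

/-- The admissible set `M` of coupling constants. -/
def couplingSet (μ1 μ2 : ℝ) : Set ℝ :=
  Set.Ioo (-Real.sqrt (μ1 * μ2)) (min μ1 μ2) ∪ Set.Ioi (max μ1 μ2)

def sigma1 (μ1 μ2 β : ℝ) : ℝ := Real.sqrt ((β - μ2) / (β ^ 2 - μ1 * μ2))
def sigma2 (μ1 μ2 β : ℝ) : ℝ := Real.sqrt ((β - μ1) / (β ^ 2 - μ1 * μ2))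

/-- `w` is the unique positive radial ground state of `-Δw + w = w³` on `ℝᴺ`,
with maximum at the origin, belonging to `H¹` and decaying exponentially. -/
structure IsGroundState (N : ℕ) (w : EuclideanSpace ℝ (Fin N) → ℝ) : Prop where
  smooth : ContDiff ℝ 2 w
  pos : ∀ x, 0 < w x
  eqn : ∀ x, -lap w x + w x = (w x) ^ 3
  radial : ∀ x y : EuclideanSpace ℝ (Fin N), ‖x‖ = ‖y‖ → w x = w y
  maxAt : ∀ x, w x ≤ w 0
  memL2 : MemLp w 2 (volume : Measure (EuclideanSpace ℝ (Fin N)))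
  decay : ∃ C > 0, ∃ c > 0, ∀ x, |w x| + ‖grad w x‖ ≤ C * Real.exp (-c * ‖x‖)

/-- `(U, V)` is the `H¹ × H¹` solution of the linearized system with right hand sides
`-Σᵢ pᵢ xᵢ² w*` and `-Σᵢ qᵢ xᵢ² w⋆`. -/
structure IsCorrector (N : ℕ) (μ1 μ2 β : ℝ) (ws wst : EuclideanSpace ℝ (Fin N) → ℝ)
    (p q : Fin N → ℝ) (U V : EuclideanSpace ℝ (Fin N) → ℝ) : Prop where
  smoothU : ContDiff ℝ 2 U
  smoothV : ContDiff ℝ 2 V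
  memU : MemLp U 2 (volume : Measure (EuclideanSpace ℝ (Fin N)))
  memV : MemLp V 2 (volume : Measure (EuclideanSpace ℝ (Fin N)))
  eqnU : ∀ x, -lap U x + U x - 3 * μ1 * (ws x) ^ 2 * U x - β * (wst x) ^ 2 * U x
      - 2 * β * ws x * wst x * V x = -(∑ i, p i * (x i) ^ 2) * ws x
  eqnV : ∀ x, -lap V x + V x - 3 * μ2 * (wst x) ^ 2 * V x - β * (ws x) ^ 2 * V x
      - 2 * β * ws x * wst x * U x = -(∑ i, q i * (x i) ^ 2) * wst x

/-- Hypotheses (H1)–(H2) on the potentials `P, Q`:  `C²` smoothness, `k` distinct common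
nondegenerate critical points `ξ l` with `P (ξ l) = Q (ξ l) = 0`, quadratic Taylor expansions
with coefficients `p l i`, `q l i`, and the combined nondegeneracy condition. -/
structure HypPQ (N : ℕ) (μ1 μ2 β : ℝ) (P Q : EuclideanSpace ℝ (Fin N) → ℝ)
    (k : ℕ) (ξ : Fin k → EuclideanSpace ℝ (Fin N)) (p q : Fin k → Fin N → ℝ) : Prop where
  smoothP : ContDiff ℝ 2 P
  smoothQ : ContDiff ℝ 2 Q
  distinct : Function.Injective ξ
  critP : ∀ l, fderiv ℝ P (ξ l) = 0
  critQ : ∀ l, fderiv ℝ Q (ξ l) = 0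
  valP : ∀ l, P (ξ l) = 0
  valQ : ∀ l, Q (ξ l) = 0
  nondegP : ∀ l, (hessian P (ξ l)).det ≠ 0
  nondegQ : ∀ l, (hessian Q (ξ l)).det ≠ 0
  nondegPQ : ∀ l, ((β - μ2) • hessian P (ξ l) + (β - μ1) • hessian Q (ξ l)).det ≠ 0
  taylorP : ∀ l, ∃ C > 0, ∃ r > 0, ∀ x, ‖x - ξ l‖ < r →
      |P x - ∑ i, p l i * (x i - ξ l i) ^ 2| ≤ C * ‖x - ξ l‖ ^ 3
  taylorQ : ∀ l, ∃ C > 0, ∃ r > 0, ∀ x, ‖x - ξ l‖ < r →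
      |Q x - ∑ i, q l i * (x i - ξ l i) ^ 2| ≤ C * ‖x - ξ l‖ ^ 3

/-- The weighted `H¹`-inner product `(f, g)_{ε,V} = ∫ ε²∇f·∇g + (ε²V + 1) f g`. -/
def innerE {N : ℕ} (ε : ℝ) (V : EuclideanSpace ℝ (Fin N) → ℝ)
    (f g : EuclideanSpace ℝ (Fin N) → ℝ) : ℝ :=
  ∫ x, (ε ^ 2 * ⟪grad f x, grad g x⟫ + (ε ^ 2 * V x + 1) * f x * g x)

/-- The squared weighted norm `‖(u,v)‖²_H`. -/
def HnormSq {N : ℕ} (ε : ℝ) (P Q : EuclideanSpace ℝ (Fin N) → ℝ)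
    (u v : EuclideanSpace ℝ (Fin N) → ℝ) : ℝ :=
  innerE ε P u u + innerE ε Q v v

/-- `(φ, ψ)` belongs to the orthogonal complement `E_ε` of the span of the pairs of
derivatives of the translated peak profiles. -/
def InEperp {N k : ℕ} (ε : ℝ) (P Q : EuclideanSpace ℝ (Fin N) → ℝ)
    (ξε : Fin k → EuclideanSpace ℝ (Fin N)) (ws wst : EuclideanSpace ℝ (Fin N) → ℝ)
    (φ ψ : EuclideanSpace ℝ (Fin N) → ℝ) : Prop :=
  ∀ l (j : Fin N),
    innerE ε P φ (pd (fun y => ws (ε⁻¹ • (y - ξε l))) j)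
      + innerE ε Q ψ (pd (fun y => wst (ε⁻¹ • (y - ξε l))) j) = 0

/-- `(u, v)` is a solution of the singularly perturbed system. -/
structure PerturbedSol (N : ℕ) (μ1 μ2 β : ℝ) (P Q : EuclideanSpace ℝ (Fin N) → ℝ)
    (ε : ℝ) (u v : EuclideanSpace ℝ (Fin N) → ℝ) : Prop where
  smooth_u : ContDiff ℝ 2 u
  smooth_v : ContDiff ℝ 2 v
  eq_u : ∀ x, -ε ^ 2 * lap u x + (ε ^ 2 * P x + 1) * u x
      = μ1 * (u x) ^ 3 + β * u x * (v x) ^ 2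
  eq_v : ∀ x, -ε ^ 2 * lap v x + (ε ^ 2 * Q x + 1) * v x
      = μ2 * (v x) ^ 3 + β * v x * (u x) ^ 2

/-- The multi-peak ansatz for the singularly perturbed system:
`u = Σ_l (w*((x-ξ_{ε,l})/ε) + ε⁴ W_l*((x-ξ_{ε,l})/ε)) + φ`, and analogously for `v`,
with each peak `ξε l` lying in the `δ`-ball around `ξ l`. -/
structure PeakForm (N k : ℕ) (δ ε : ℝ) (ξ ξε : Fin k → EuclideanSpace ℝ (Fin N))
    (ws wst : EuclideanSpace ℝ (Fin N) → ℝ)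
    (Ws Wst : Fin k → EuclideanSpace ℝ (Fin N) → ℝ)
    (φ ψ u v : EuclideanSpace ℝ (Fin N) → ℝ) : Prop where
  near : ∀ l, ξε l ∈ Metric.ball (ξ l) δ
  u_eq : ∀ x, u x
      = (∑ l, (ws (ε⁻¹ • (x - ξε l)) + ε ^ 4 * Ws l (ε⁻¹ • (x - ξε l)))) + φ x
  v_eq : ∀ x, v x
      = (∑ l, (wst (ε⁻¹ • (x - ξε l)) + ε ^ 4 * Wst l (ε⁻¹ • (x - ξε l)))) + ψ x

/-- `(λ, u, v)` is a normalized solution of the constrained system with mass `ρ²`. -/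
structure NormSol (N : ℕ) (μ1 μ2 β : ℝ) (P Q : EuclideanSpace ℝ (Fin N) → ℝ)
    (ρ lam : ℝ) (u v : EuclideanSpace ℝ (Fin N) → ℝ) : Prop where
  lam_pos : 0 < lam
  smooth_u : ContDiff ℝ 2 u
  smooth_v : ContDiff ℝ 2 v
  mem_u : MemLp u 2 (volume : Measure (EuclideanSpace ℝ (Fin N)))
  mem_v : MemLp v 2 (volume : Measure (EuclideanSpace ℝ (Fin N)))
  eq_u : ∀ x, -lap u x + (P x + lam) * u x = μ1 * (u x) ^ 3 + β * u x * (v x) ^ 2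
  eq_v : ∀ x, -lap v x + (Q x + lam) * v x = μ2 * (v x) ^ 3 + β * v x * (u x) ^ 2
  mass : ∫ x, ((u x) ^ 2 + (v x) ^ 2) = ρ ^ 2

/-- The concentrating form of a normalized multi-peak solution:
`u = √λ (Σ_l (w*(√λ(x-ξ_{ρ,l})) + λ⁻² W_l*(√λ(x-ξ_{ρ,l}))) + φ)`, and analogously for `v`. -/
structure ConcForm (N k : ℕ) (δ lam : ℝ) (ξ ξρ : Fin k → EuclideanSpace ℝ (Fin N))
    (ws wst : EuclideanSpace ℝ (Fin N) → ℝ)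
    (Ws Wst : Fin k → EuclideanSpace ℝ (Fin N) → ℝ)
    (φ ψ u v : EuclideanSpace ℝ (Fin N) → ℝ) : Prop where
  near : ∀ l, ξρ l ∈ Metric.ball (ξ l) δ
  u_eq : ∀ x, u x = Real.sqrt lam *
      ((∑ l, (ws (Real.sqrt lam • (x - ξρ l))
        + (lam ^ 2)⁻¹ * Ws l (Real.sqrt lam • (x - ξρ l)))) + φ x)
  v_eq : ∀ x, v x = Real.sqrt lam *
      ((∑ l, (wst (Real.sqrt lam • (x - ξρ l))
        + (lam ^ 2)⁻¹ * Wst l (Real.sqrt lam • (x - ξρ l)))) + ψ x)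

/-- Nondegeneracy of the linearized operator at `(w*, w⋆)`: every bounded solution of the
linearized limiting system is a linear combination of the translation modes.  (This encodes
the requirement `β ∉ {β_n}`.) -/
def NondegLin (N : ℕ) (μ1 μ2 β : ℝ) (ws wst : EuclideanSpace ℝ (Fin N) → ℝ) : Prop :=
  ∀ η1 η2 : EuclideanSpace ℝ (Fin N) → ℝ, ContDiff ℝ 2 η1 → ContDiff ℝ 2 η2 →
    (∃ C, ∀ x, |η1 x| ≤ C ∧ |η2 x| ≤ C) →
    (∀ x, -lap η1 x + η1 x
        = 3 * μ1 * (ws x) ^ 2 * η1 x + β * ((wst x) ^ 2 * η1 x + 2 * ws x * wst x * η2 x)) →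
    (∀ x, -lap η2 x + η2 x
        = 3 * μ2 * (wst x) ^ 2 * η2 x + β * ((ws x) ^ 2 * η2 x + 2 * ws x * wst x * η1 x)) →
    ∃ a : Fin N → ℝ, (∀ x, η1 x = ∑ j, a j * pd ws j x) ∧ (∀ x, η2 x = ∑ j, a j * pd wst j x)


section helpers
variable {N : ℕ} {f g : EucSp N → ℝ} {x : EucSp N} {i j : Fin N}

lemma contDiff_pd (hf : ContDiff ℝ 2 f) (i : Fin N) : ContDiff ℝ 1 (pd f i) := by
  have h1 : ContDiff ℝ 1 (fderiv ℝ f) := hf.fderiv_right (by norm_num)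
  exact h1.clm_apply contDiff_const

lemma continuous_pd (hf : ContDiff ℝ 1 f) (i : Fin N) : Continuous (pd f i) := by
  have h1 : ContDiff ℝ 0 (fderiv ℝ f) := hf.fderiv_right (by norm_num)
  exact (h1.clm_apply contDiff_const).continuous

lemma pd_add (hf : DifferentiableAt ℝ f x) (hg : DifferentiableAt ℝ g x) :
    pd (fun y => f y + g y) i x = pd f i x + pd g i x := by
  unfold pd; rw [fderiv_fun_add hf hg]; simp

lemma pd_mul (hf : DifferentiableAt ℝ f x) (hg : DifferentiableAt ℝ g x) :
    pd (fun y => f y * g y) i x = f x * pd g i x + g x * pd f i x := by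
  unfold pd; rw [fderiv_fun_mul hf hg]; simp

lemma pd_const_mul (c : ℝ) (hf : DifferentiableAt ℝ f x) :
    pd (fun y => c * f y) i x = c * pd f i x := by
  unfold pd; rw [fderiv_const_mul hf]; simp

lemma pd_const (c : ℝ) : pd (fun _ : EucSp N => c) i x = 0 := by
  unfold pd; rw [fderiv_fun_const]; simp

lemma pd_pow_succ (hf : DifferentiableAt ℝ f x) (n : ℕ) :
    pd (fun y => f y ^ (n + 1)) i x = (n + 1) * f x ^ n * pd f i x := by
  induction n with
  | zero =>
      have : (fun y => f y ^ 1) = f := by funext y; exact pow_one _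
      rw [this]; simp
  | succ n ih =>
      have : (fun y => f y ^ (n + 2)) = fun y => f y ^ (n + 1) * f y := by
        funext y; ring
      rw [this, pd_mul (hf.fun_pow (n+1)) hf, ih]
      push_cast
      ring

lemma pd_sum {s : Finset (Fin N)} {F : Fin N → EucSp N → ℝ}
    (hF : ∀ k ∈ s, DifferentiableAt ℝ (F k) x) :
    pd (fun y => ∑ k ∈ s, F k y) i x = ∑ k ∈ s, pd (F k) i x := by
  unfold pd; rw [fderiv_fun_sum hF]; simp

lemma pd_coord_same : pd (fun y : EucSp N => y i) i x = 1 := by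
  unfold pd
  have : (fun y : EucSp N => y i) = fun y => (EuclideanSpace.proj i) y := rfl
  rw [this, ContinuousLinearMap.fderiv]
  simp [EuclideanSpace.proj]

lemma pd_contDiff_differentiable (hf : ContDiff ℝ 2 f) (i : Fin N) :
    DifferentiableAt ℝ (pd f i) x :=
  ((contDiff_pd hf i).differentiable one_ne_zero) x

lemma pd_pd_symm (hf : ContDiff ℝ 2 f) :
    pd (pd f j) i x = pd (pd f i) j x := by
  have hd : DifferentiableAt ℝ (fderiv ℝ f) x :=
    ((hf.fderiv_right (m := 1) (by norm_num)).differentiable one_ne_zero) x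
  have key : ∀ w : EucSp N, fderiv ℝ (fun y => fderiv ℝ f y w) x
      = (fderiv ℝ (fderiv ℝ f) x).flip w := by
    intro w
    rw [fderiv_clm_apply hd (differentiableAt_const w)]
    simp
  have hsymm := (hf.contDiffAt.isSymmSndFDerivAt (x := x) (by norm_num))
    (EuclideanSpace.single i (1:ℝ)) (EuclideanSpace.single j (1:ℝ))
  show fderiv ℝ (pd f j) x _ = fderiv ℝ (pd f i) x _
  have e1 : pd f j = fun y => fderiv ℝ f y (EuclideanSpace.single j 1) := rfl
  have e2 : pd f i = fun y => fderiv ℝ f y (EuclideanSpace.single i 1) := rfl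
  rw [e1, e2, key, key]
  simpa using hsymm

lemma lap_eq : lap f x = ∑ i : Fin N, pd (pd f i) i x := rfl

lemma grad_apply : grad f x i = pd f i x := rfl

lemma inner_grad (y : EucSp N) : ⟪grad f x, y⟫ = ∑ i : Fin N, pd f i x * y i := by
  simp [real_inner_comm, PiLp.inner_apply, grad_apply, mul_comm]

lemma norm_grad_sq : ‖grad f x‖ ^ 2 = ∑ i : Fin N, (pd f i x) ^ 2 := by
  rw [← real_inner_self_eq_norm_sq, inner_grad]
  simp [grad_apply, sq]

end helpers

lemma star_identity {N : ℕ} (μ1 μ2 β ε : ℝ) (P Q u v : EucSp N → ℝ)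
    (hP : ContDiff ℝ 2 P) (hQ : ContDiff ℝ 2 Q)
    (hu : ContDiff ℝ 2 u) (hv : ContDiff ℝ 2 v)
    (hequ : ∀ x, -ε ^ 2 * lap u x + (ε ^ 2 * P x + 1) * u x
      = μ1 * (u x) ^ 3 + β * u x * (v x) ^ 2)
    (heqv : ∀ x, -ε ^ 2 * lap v x + (ε ^ 2 * Q x + 1) * v x
      = μ2 * (v x) ^ 3 + β * v x * (u x) ^ 2)
    (j : Fin N) (x : EucSp N) :
    -β * pd (fun y => (v y) ^ 2 * (u y) ^ 2) j x
      - 2 * ε ^ 2 * (∑ i : Fin N, pd (fun y => pd u j y * pd u i y + pd v j y * pd v i y) i x)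
      + ε ^ 2 * pd (fun y => ∑ i : Fin N, ((pd u i y) ^ 2 + (pd v i y) ^ 2)) j x
      + pd (fun y => (ε ^ 2 * P y + 1) * (u y) ^ 2 + (ε ^ 2 * Q y + 1) * (v y) ^ 2) j x
      - (1 / 2) * (μ1 * pd (fun y => (u y) ^ 4) j x + μ2 * pd (fun y => (v y) ^ 4) j x)
      = ε ^ 2 * (pd P j x * (u x) ^ 2 + pd Q j x * (v x) ^ 2) := by
  have hud : ∀ y, DifferentiableAt ℝ u y := fun y => (hu.differentiable two_ne_zero) y
  have hvd : ∀ y, DifferentiableAt ℝ v y := fun y => (hv.differentiable two_ne_zero) y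
  have hPd : ∀ y, DifferentiableAt ℝ P y := fun y => (hP.differentiable two_ne_zero) y
  have hQd : ∀ y, DifferentiableAt ℝ Q y := fun y => (hQ.differentiable two_ne_zero) y
  have pdud : ∀ (k : Fin N) (y : EucSp N), DifferentiableAt ℝ (pd u k) y :=
    fun k y => pd_contDiff_differentiable hu k
  have pdvd : ∀ (k : Fin N) (y : EucSp N), DifferentiableAt ℝ (pd v k) y :=
    fun k y => pd_contDiff_differentiable hv k
  -- h1 : derivative of v² u²
  have h1 : pd (fun y => (v y) ^ 2 * (u y) ^ 2) j x
      = 2 * (v x) ^ 2 * u x * pd u j x + 2 * (u x) ^ 2 * v x * pd v j x := by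
    rw [pd_mul ((hvd x).fun_pow 2) ((hud x).fun_pow 2), pd_pow_succ (hud x) 1, pd_pow_succ (hvd x) 1]
    push_cast; ring
  -- h2 : divergence term
  have h2 : (∑ i : Fin N, pd (fun y => pd u j y * pd u i y + pd v j y * pd v i y) i x)
      = (∑ i : Fin N, pd (pd u i) j x * pd u i x) + pd u j x * lap u x
        + (∑ i : Fin N, pd (pd v i) j x * pd v i x) + pd v j x * lap v x := by
    rw [lap_eq, lap_eq, Finset.mul_sum, Finset.mul_sum, ← Finset.sum_add_distrib,
      ← Finset.sum_add_distrib, ← Finset.sum_add_distrib]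
    refine Finset.sum_congr rfl fun i _ => ?_
    rw [pd_add ((pdud j x).fun_mul (pdud i x)) ((pdvd j x).fun_mul (pdvd i x)),
      pd_mul (pdud j x) (pdud i x), pd_mul (pdvd j x) (pdvd i x),
      pd_pd_symm (i := i) (j := j) hu, pd_pd_symm (i := i) (j := j) hv]
    ring
  -- h3 : derivative of the gradient-square sum
  have h3 : pd (fun y => ∑ i : Fin N, ((pd u i y) ^ 2 + (pd v i y) ^ 2)) j x
      = 2 * (∑ i : Fin N, pd (pd u i) j x * pd u i x)
        + 2 * (∑ i : Fin N, pd (pd v i) j x * pd v i x) := by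
    rw [pd_sum (fun k _ => ((pdud k x).fun_pow 2).fun_add ((pdvd k x).fun_pow 2)),
      Finset.mul_sum, Finset.mul_sum, ← Finset.sum_add_distrib]
    refine Finset.sum_congr rfl fun i _ => ?_
    rw [pd_add ((pdud i x).fun_pow 2) ((pdvd i x).fun_pow 2), pd_pow_succ (pdud i x) 1,
      pd_pow_succ (pdvd i x) 1]
    push_cast; ring
  -- h4 : derivative of the potential term
  have hPc : DifferentiableAt ℝ (fun y => ε ^ 2 * P y + 1) x :=
    ((hPd x).const_mul (ε ^ 2)).add_const 1
  have hQc : DifferentiableAt ℝ (fun y => ε ^ 2 * Q y + 1) x :=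
    ((hQd x).const_mul (ε ^ 2)).add_const 1
  have hPc' : pd (fun y => ε ^ 2 * P y + 1) j x = ε ^ 2 * pd P j x := by
    rw [pd_add ((hPd x).const_mul (ε ^ 2)) (differentiableAt_const 1),
      pd_const_mul _ (hPd x), pd_const]
    ring
  have hQc' : pd (fun y => ε ^ 2 * Q y + 1) j x = ε ^ 2 * pd Q j x := by
    rw [pd_add ((hQd x).const_mul (ε ^ 2)) (differentiableAt_const 1),
      pd_const_mul _ (hQd x), pd_const]
    ring
  have h4 : pd (fun y => (ε ^ 2 * P y + 1) * (u y) ^ 2 + (ε ^ 2 * Q y + 1) * (v y) ^ 2) j x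
      = ε ^ 2 * pd P j x * (u x) ^ 2 + (ε ^ 2 * P x + 1) * (2 * u x * pd u j x)
        + ε ^ 2 * pd Q j x * (v x) ^ 2 + (ε ^ 2 * Q x + 1) * (2 * v x * pd v j x) := by
    rw [pd_add (hPc.fun_mul ((hud x).fun_pow 2)) (hQc.fun_mul ((hvd x).fun_pow 2)),
      pd_mul hPc ((hud x).fun_pow 2), pd_mul hQc ((hvd x).fun_pow 2),
      pd_pow_succ (hud x) 1, pd_pow_succ (hvd x) 1, hPc', hQc']
    push_cast; ring
  have h5 : pd (fun y => (u y) ^ 4) j x = 4 * (u x) ^ 3 * pd u j x := by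
    rw [show (4:ℕ) = 3 + 1 from rfl, pd_pow_succ (hud x) 3]; norm_num
  have h6 : pd (fun y => (v y) ^ 4) j x = 4 * (v x) ^ 3 * pd v j x := by
    rw [show (4:ℕ) = 3 + 1 from rfl, pd_pow_succ (hvd x) 3]; norm_num
  rw [h1, h2, h3, h4, h5, h6]
  linear_combination (2 * pd u j x) * hequ x + (2 * pd v j x) * heqv x

/-- **Lemma 2.3**: local Pohozaev identity.  Let `(u, v)` be a nontrivial solution of the
singularly perturbed system.  For any bounded (open) domain `Ω ⊂ ℝᴺ`, with surface measure
`σb` on `∂Ω` and outward unit normal field `nv` (for which the divergence theorem holds),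
and for every coordinate direction `j`, the stated identity between the interior integral
of `∂_j P u² + ∂_j Q v²` and boundary integrals holds. -/

theorem local_pohozaev_identity
    (N : ℕ) (hN : N = 2 ∨ N = 3)
    (μ1 μ2 β : ℝ) (hμ1 : 0 < μ1) (hμ2 : 0 < μ2)
    (P Q : EucSp N → ℝ) (hP : ContDiff ℝ 2 P) (hQ : ContDiff ℝ 2 Q)
    (ε : ℝ) (hε : 0 < ε)
    (u v : EucSp N → ℝ) (hsol : PerturbedSol N μ1 μ2 β P Q ε u v)
    (hmemu : MemLp u 2 (volume : Measure (EucSp N)))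
    (hmemv : MemLp v 2 (volume : Measure (EucSp N)))
    (hnontriv : ¬(∀ x, u x = 0 ∧ v x = 0))
    (Ω : Set (EucSp N)) (hΩo : IsOpen Ω) (hΩb : Bornology.IsBounded Ω)
    (σb : Measure (EucSp N)) (nv : EucSp N → EucSp N)
    (hunit : ∀ x ∈ frontier Ω, ‖nv x‖ = 1)
    -- the divergence theorem on `Ω` (with boundary `∂Ω = frontier Ω`)
    (hdiv : ∀ f : EucSp N → ℝ, ContDiff ℝ 1 f → ∀ i : Fin N,
      (∫ x in Ω, pd f i x) = ∫ x in frontier Ω, f x * nv x i ∂σb)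
    (j : Fin N) :
    ε ^ 2 * ∫ x in Ω, (pd P j x * (u x) ^ 2 + pd Q j x * (v x) ^ 2)
      = -β * (∫ x in frontier Ω, (v x) ^ 2 * (u x) ^ 2 * nv x j ∂σb)
        - 2 * ε ^ 2 * (∫ x in frontier Ω,
            (pd u j x * ⟪grad u x, nv x⟫ + pd v j x * ⟪grad v x, nv x⟫) ∂σb)
        + ε ^ 2 * (∫ x in frontier Ω,
            (‖grad u x‖ ^ 2 * nv x j + ‖grad v x‖ ^ 2 * nv x j) ∂σb)
        + (∫ x in frontier Ω,
            ((ε ^ 2 * P x + 1) * (u x) ^ 2 * nv x j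
              + (ε ^ 2 * Q x + 1) * (v x) ^ 2 * nv x j) ∂σb)
        - (1 / 2) * (μ1 * (∫ x in frontier Ω, (u x) ^ 4 * nv x j ∂σb)
            + μ2 * (∫ x in frontier Ω, (v x) ^ 4 * nv x j ∂σb)) := by
  classical
  have hu2 := hsol.smooth_u
  have hv2 := hsol.smooth_v
  rcases Set.eq_empty_or_nonempty Ω with hΩe | hΩne
  · have hfr : frontier Ω = ∅ := by rw [hΩe]; simp
    rw [hfr, hΩe]
    simp
  -- nonempty case
  have hKc : IsCompact (closure Ω) := hΩb.isCompact_closure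
  have hΩm : MeasurableSet Ω := hΩo.measurableSet
  have hvolfin : volume Ω ≠ ⊤ :=
    ne_top_of_le_ne_top hKc.measure_lt_top.ne (measure_mono subset_closure)
  have hvolpos : volume Ω ≠ 0 := (hΩo.measure_pos volume hΩne).ne'
  have hvR : (0:ℝ) < (volume Ω).toReal := ENNReal.toReal_pos hvolpos hvolfin
  have intOn : ∀ {h : EucSp N → ℝ}, Continuous h → IntegrableOn h Ω volume := by
    intro h hc
    exact ((hc.continuousOn).integrableOn_compact hKc).mono_set subset_closure
  have hcoordC : ∀ i : Fin N, ContDiff ℝ 1 (fun y : EucSp N => y i) := by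
    intro i
    exact (EuclideanSpace.proj i : EucSp N →L[ℝ] ℝ).contDiff
  -- key integrability of boundary integrands
  have keyInt : ∀ (f : EucSp N → ℝ), ContDiff ℝ 1 f → ∀ i : Fin N,
      IntegrableOn (fun x => f x * nv x i) (frontier Ω) σb := by
    intro f hf i
    have hLd : ∀ x : EucSp N, pd (fun y : EucSp N => y i) i x = 1 := fun x => pd_coord_same
    have hLint : IntegrableOn (fun x => x i * nv x i) (frontier Ω) σb := by
      by_contra h0
      have hd := hdiv (fun y => y i) (hcoordC i) i
      rw [integral_undef h0] at hd
      have h1 : (∫ x in Ω, pd (fun y : EucSp N => y i) i x) = (volume Ω).toReal := by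
        simp only [hLd]
        simp [measureReal_def]
      rw [h1] at hd
      exact hvR.ne' hd
    by_contra hni
    have hfL : ¬ IntegrableOn (fun x => (f x + x i) * nv x i) (frontier Ω) σb := by
      intro h
      apply hni
      have h2 := h.sub hLint
      have h3 : ((fun x : EucSp N => (f x + x i) * nv x i) - (fun x : EucSp N => x i * nv x i))
          = fun x => f x * nv x i := by
        funext y; simp [Pi.sub_apply]; ring
      rwa [h3] at h2
    have e1 := hdiv f hf i
    rw [integral_undef hni] at e1
    have e2 := hdiv (fun y => f y + y i) (hf.add (hcoordC i)) i
    rw [integral_undef hfL] at e2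
    have hpd : ∀ x : EucSp N, pd (fun y : EucSp N => f y + y i) i x = pd f i x + 1 := by
      intro x
      rw [pd_add ((hf.differentiable one_ne_zero) x) (((hcoordC i).differentiable one_ne_zero) x), hLd]
    have e3 : (∫ x in Ω, pd (fun y : EucSp N => f y + y i) i x)
        = (∫ x in Ω, pd f i x) + (volume Ω).toReal := by
      simp only [hpd]
      rw [integral_add (intOn (continuous_pd hf i)) (intOn continuous_const)]
      simp [measureReal_def]
    rw [e3, e1] at e2
    simp at e2
    exact hvR.ne' e2
  -- C¹ regularity of all integrands
  have hu1 : ContDiff ℝ 1 u := hu2.of_le one_le_two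
  have hv1 : ContDiff ℝ 1 v := hv2.of_le one_le_two
  have hP1 : ContDiff ℝ 1 P := hP.of_le one_le_two
  have hQ1 : ContDiff ℝ 1 Q := hQ.of_le one_le_two
  have hA1 : ContDiff ℝ 1 (fun y : EucSp N => (v y) ^ 2 * (u y) ^ 2) :=
    (hv1.pow 2).mul (hu1.pow 2)
  have hfv1 : ∀ i : Fin N,
      ContDiff ℝ 1 (fun y : EucSp N => pd u j y * pd u i y + pd v j y * pd v i y) := by
    intro i
    exact ((contDiff_pd hu2 j).mul (contDiff_pd hu2 i)).add
      ((contDiff_pd hv2 j).mul (contDiff_pd hv2 i))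
  have hG1 : ContDiff ℝ 1 (fun y : EucSp N => ∑ i : Fin N, ((pd u i y) ^ 2 + (pd v i y) ^ 2)) :=
    ContDiff.sum fun i _ => ((contDiff_pd hu2 i).pow 2).add ((contDiff_pd hv2 i).pow 2)
  have hg21 : ContDiff ℝ 1
      (fun y : EucSp N => (ε ^ 2 * P y + 1) * (u y) ^ 2 + (ε ^ 2 * Q y + 1) * (v y) ^ 2) :=
    (((contDiff_const.mul hP1).add contDiff_const).mul (hu1.pow 2)).add
      (((contDiff_const.mul hQ1).add contDiff_const).mul (hv1.pow 2))
  have hU4 : ContDiff ℝ 1 (fun y : EucSp N => (u y) ^ 4) := hu1.pow 4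
  have hV4 : ContDiff ℝ 1 (fun y : EucSp N => (v y) ^ 4) := hv1.pow 4
  -- boundary-to-interior conversions
  have B1 : (∫ x in frontier Ω, (v x) ^ 2 * (u x) ^ 2 * nv x j ∂σb)
      = ∫ x in Ω, pd (fun y => (v y) ^ 2 * (u y) ^ 2) j x := (hdiv _ hA1 j).symm
  have B2 : (∫ x in frontier Ω,
        (pd u j x * ⟪grad u x, nv x⟫ + pd v j x * ⟪grad v x, nv x⟫) ∂σb)
      = ∫ x in Ω, ∑ i : Fin N,
          pd (fun y => pd u j y * pd u i y + pd v j y * pd v i y) i x := by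
    have h1 : ∀ x : EucSp N,
        pd u j x * ⟪grad u x, nv x⟫ + pd v j x * ⟪grad v x, nv x⟫
        = ∑ i : Fin N, (pd u j x * pd u i x + pd v j x * pd v i x) * nv x i := by
      intro x
      rw [inner_grad, inner_grad, Finset.mul_sum, Finset.mul_sum, ← Finset.sum_add_distrib]
      exact Finset.sum_congr rfl fun i _ => by ring
    simp only [h1]
    rw [integral_finset_sum _ (fun i _ => keyInt _ (hfv1 i) i)]
    rw [integral_finset_sum _ (fun i _ => intOn (continuous_pd (hfv1 i) i))]
    exact Finset.sum_congr rfl fun i _ => (hdiv _ (hfv1 i) i).symm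
  have B3 : (∫ x in frontier Ω,
        (‖grad u x‖ ^ 2 * nv x j + ‖grad v x‖ ^ 2 * nv x j) ∂σb)
      = ∫ x in Ω, pd (fun y => ∑ i : Fin N, ((pd u i y) ^ 2 + (pd v i y) ^ 2)) j x := by
    have h1 : ∀ x : EucSp N, ‖grad u x‖ ^ 2 * nv x j + ‖grad v x‖ ^ 2 * nv x j
        = (∑ i : Fin N, ((pd u i x) ^ 2 + (pd v i x) ^ 2)) * nv x j := by
      intro x
      rw [norm_grad_sq, norm_grad_sq, Finset.sum_add_distrib]
      ring
    simp only [h1]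
    exact (hdiv _ hG1 j).symm
  have B4 : (∫ x in frontier Ω,
        ((ε ^ 2 * P x + 1) * (u x) ^ 2 * nv x j
          + (ε ^ 2 * Q x + 1) * (v x) ^ 2 * nv x j) ∂σb)
      = ∫ x in Ω,
          pd (fun y => (ε ^ 2 * P y + 1) * (u y) ^ 2 + (ε ^ 2 * Q y + 1) * (v y) ^ 2) j x := by
    have h1 : ∀ x : EucSp N,
        (ε ^ 2 * P x + 1) * (u x) ^ 2 * nv x j + (ε ^ 2 * Q x + 1) * (v x) ^ 2 * nv x j
        = ((ε ^ 2 * P x + 1) * (u x) ^ 2 + (ε ^ 2 * Q x + 1) * (v x) ^ 2) * nv x j := by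
      intro x; ring
    simp only [h1]
    exact (hdiv _ hg21 j).symm
  have B5 : (∫ x in frontier Ω, (u x) ^ 4 * nv x j ∂σb)
      = ∫ x in Ω, pd (fun y => (u y) ^ 4) j x := (hdiv _ hU4 j).symm
  have B6 : (∫ x in frontier Ω, (v x) ^ 4 * nv x j ∂σb)
      = ∫ x in Ω, pd (fun y => (v y) ^ 4) j x := (hdiv _ hV4 j).symm
  rw [B1, B2, B3, B4, B5, B6]
  -- combine the interior integrals
  have i1 : IntegrableOn (fun x => pd (fun y => (v y) ^ 2 * (u y) ^ 2) j x) Ω volume :=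
    intOn (continuous_pd hA1 j)
  have i2 : IntegrableOn (fun x => ∑ i : Fin N,
      pd (fun y => pd u j y * pd u i y + pd v j y * pd v i y) i x) Ω volume :=
    intOn (continuous_finset_sum _ fun i _ => continuous_pd (hfv1 i) i)
  have i3 : IntegrableOn
      (fun x => pd (fun y => ∑ i : Fin N, ((pd u i y) ^ 2 + (pd v i y) ^ 2)) j x) Ω volume :=
    intOn (continuous_pd hG1 j)
  have i4 : IntegrableOn (fun x =>
      pd (fun y => (ε ^ 2 * P y + 1) * (u y) ^ 2 + (ε ^ 2 * Q y + 1) * (v y) ^ 2) j x)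
      Ω volume := intOn (continuous_pd hg21 j)
  have i5 : IntegrableOn (fun x => pd (fun y => (u y) ^ 4) j x) Ω volume :=
    intOn (continuous_pd hU4 j)
  have i6 : IntegrableOn (fun x => pd (fun y => (v y) ^ 4) j x) Ω volume :=
    intOn (continuous_pd hV4 j)
  have hstar := star_identity μ1 μ2 β ε P Q u v hP hQ hu2 hv2 hsol.eq_u hsol.eq_v j
  calc ε ^ 2 * ∫ x in Ω, (pd P j x * (u x) ^ 2 + pd Q j x * (v x) ^ 2)
      = ∫ x in Ω, ε ^ 2 * (pd P j x * (u x) ^ 2 + pd Q j x * (v x) ^ 2) :=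
        (integral_const_mul _ _).symm
    _ = ∫ x in Ω,
          (-β * pd (fun y => (v y) ^ 2 * (u y) ^ 2) j x
            - 2 * ε ^ 2 * (∑ i : Fin N,
                pd (fun y => pd u j y * pd u i y + pd v j y * pd v i y) i x)
            + ε ^ 2 * pd (fun y => ∑ i : Fin N, ((pd u i y) ^ 2 + (pd v i y) ^ 2)) j x
            + pd (fun y => (ε ^ 2 * P y + 1) * (u y) ^ 2 + (ε ^ 2 * Q y + 1) * (v y) ^ 2) j x
            - (1 / 2) * (μ1 * pd (fun y => (u y) ^ 4) j x
                + μ2 * pd (fun y => (v y) ^ 4) j x)) := by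
        refine setIntegral_congr_fun hΩm fun x _ => (hstar x).symm
    _ = -β * (∫ x in Ω, pd (fun y => (v y) ^ 2 * (u y) ^ 2) j x)
        - 2 * ε ^ 2 * (∫ x in Ω, ∑ i : Fin N,
            pd (fun y => pd u j y * pd u i y + pd v j y * pd v i y) i x)
        + ε ^ 2 * (∫ x in Ω,
            pd (fun y => ∑ i : Fin N, ((pd u i y) ^ 2 + (pd v i y) ^ 2)) j x)
        + (∫ x in Ω,
            pd (fun y => (ε ^ 2 * P y + 1) * (u y) ^ 2 + (ε ^ 2 * Q y + 1) * (v y) ^ 2) j x)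
        - (1 / 2) * (μ1 * (∫ x in Ω, pd (fun y => (u y) ^ 4) j x)
            + μ2 * (∫ x in Ω, pd (fun y => (v y) ^ 4) j x)) := by
        have cA := continuous_pd hA1 j
        have cB : Continuous (fun x => ∑ i : Fin N,
            pd (fun y => pd u j y * pd u i y + pd v j y * pd v i y) i x) :=
          continuous_finset_sum _ fun i _ => continuous_pd (hfv1 i) i
        have cC := continuous_pd hG1 j
        have cD := continuous_pd hg21 j
        have cE := continuous_pd hU4 j
        have cF := continuous_pd hV4 j
        have k1 := intOn (continuous_const.fun_mul cA : Continuous fun x =>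
          -β * pd (fun y => (v y) ^ 2 * (u y) ^ 2) j x)
        have k2 := intOn (continuous_const.fun_mul cB : Continuous fun x =>
          2 * ε ^ 2 * ∑ i : Fin N,
            pd (fun y => pd u j y * pd u i y + pd v j y * pd v i y) i x)
        have k3 := intOn (continuous_const.fun_mul cC : Continuous fun x =>
          ε ^ 2 * pd (fun y => ∑ i : Fin N, ((pd u i y) ^ 2 + (pd v i y) ^ 2)) j x)
        have k5a := intOn (continuous_const.fun_mul cE : Continuous fun x =>
          μ1 * pd (fun y => (u y) ^ 4) j x)
        have k5b := intOn (continuous_const.fun_mul cF : Continuous fun x =>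
          μ2 * pd (fun y => (v y) ^ 4) j x)
        have k12 : IntegrableOn (fun x =>
            -β * pd (fun y => (v y) ^ 2 * (u y) ^ 2) j x
            - 2 * ε ^ 2 * ∑ i : Fin N,
              pd (fun y => pd u j y * pd u i y + pd v j y * pd v i y) i x) Ω volume :=
          k1.sub k2
        have k123 : IntegrableOn (fun x =>
            -β * pd (fun y => (v y) ^ 2 * (u y) ^ 2) j x
            - 2 * ε ^ 2 * (∑ i : Fin N,
              pd (fun y => pd u j y * pd u i y + pd v j y * pd v i y) i x)
            + ε ^ 2 * pd (fun y => ∑ i : Fin N, ((pd u i y) ^ 2 + (pd v i y) ^ 2)) j x)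
            Ω volume := k12.add k3
        have k1234 : IntegrableOn (fun x =>
            -β * pd (fun y => (v y) ^ 2 * (u y) ^ 2) j x
            - 2 * ε ^ 2 * (∑ i : Fin N,
              pd (fun y => pd u j y * pd u i y + pd v j y * pd v i y) i x)
            + ε ^ 2 * pd (fun y => ∑ i : Fin N, ((pd u i y) ^ 2 + (pd v i y) ^ 2)) j x
            + pd (fun y => (ε ^ 2 * P y + 1) * (u y) ^ 2
                + (ε ^ 2 * Q y + 1) * (v y) ^ 2) j x) Ω volume := k123.add i4
        have k56 : IntegrableOn (fun x =>
            μ1 * pd (fun y => (u y) ^ 4) j x + μ2 * pd (fun y => (v y) ^ 4) j x) Ω volume :=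
          k5a.add k5b
        have k5' : IntegrableOn (fun x => (1:ℝ) / 2 *
            (μ1 * pd (fun y => (u y) ^ 4) j x + μ2 * pd (fun y => (v y) ^ 4) j x)) Ω volume :=
          k56.const_mul ((1:ℝ)/2)
        rw [integral_sub k1234 k5', integral_add k123 i4,
          integral_add k12 k3, integral_sub k1 k2,
          integral_const_mul, integral_const_mul, integral_const_mul, integral_const_mul,
          integral_add k5a k5b, integral_const_mul, integral_const_mul]
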